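/- Let n ≥ 3, c > 0, η = (n/(n−1))^{1/2}, and let G(w) = c w^{n−1} + ε/w − conj(w). If ε > 0 satisfies the bound ε < min{((n−2)/n)(2/(nc))^{2/(n−2)}, (1/(nc))^{2/(n−2)}(n/(n−1))^{n/(n−2)}, (1/(c(n−1)))^{2/(n−2)}((n−1)/n)^{n/(n−2)}}, then G has exactly n zeros in the open annulus η^{-1}√ε < |w| < √ε, exactly n zeros on the circle-family |w| = ρ₂ with √ε < ρ₂ < η√ε, and no zeros with |w| ≤ η^{-1}√ε. -/

import Mathlib

lemma aux_ncard_pow (n : ℕ) (hn : 0 < n) (a : ℂ) (ha : a ≠ 0) :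
    Set.ncard {w : ℂ | w ^ n = a} = n := by
  classical
  have hsep : (Polynomial.X ^ n - Polynomial.C a).Separable :=
    Polynomial.separable_X_pow_sub_C a (Nat.cast_ne_zero.mpr hn.ne') ha
  have hnd : (Polynomial.nthRoots n a).Nodup := Polynomial.nodup_roots hsep
  have hsplit : ((Polynomial.X ^ n - Polynomial.C a : Polynomial ℂ)).Splits :=
    IsAlgClosed.splits _
  rw [Polynomial.splits_iff_card_roots] at hsplit
  have hcard : Multiset.card (Polynomial.nthRoots n a) = n := by
    rw [Polynomial.nthRoots, hsplit, Polynomial.natDegree_X_pow_sub_C]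
  have hseteq : {w : ℂ | w ^ n = a} = ((Polynomial.nthRoots n a).toFinset : Set ℂ) := by
    ext w; simp [Polynomial.mem_nthRoots hn]
  rw [hseteq, Set.ncard_coe_finset, Multiset.toFinset_card_of_nodup hnd, hcard]

lemma aux_rpow (ε A r N : ℝ) (hε : 0 < ε) (hA : 0 < A) (hr : 0 < r) (hN : 2 < N)
    (h : ε < A ^ ((2:ℝ)/(N-2)) * r ^ (N/(N-2))) : ε ^ ((N-2)/2) < A * r ^ (N/2) := by
  have hm : 0 < N - 2 := by linarith
  have h1 : r ^ (N/(N-2)) = (r ^ (N/2)) ^ ((2:ℝ)/(N-2)) := by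
    rw [← Real.rpow_mul hr.le]; congr 1; field_simp
  have hX : 0 < A * r ^ (N/2) := by positivity
  rw [h1, ← Real.mul_rpow hA.le (by positivity)] at h
  have h3 := Real.rpow_lt_rpow hε.le h (by positivity : (0:ℝ) < (N-2)/2)
  have he : (2:ℝ)/(N-2) * ((N-2)/2) = 1 := by field_simp
  rwa [← Real.rpow_mul hX.le, he, Real.rpow_one] at h3

/-- for `w ≠ 0`, the equation `c w^{n-1} + ε/w - conj w = 0` is equivalent to
`c w^n = |w|^2 - ε`. -/
lemma aux_equiv (n : ℕ) (hn : 3 ≤ n) (c ε : ℝ) (w : ℂ) (hw : w ≠ 0) :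
    ((c : ℂ) * w ^ (n - 1) + (ε : ℂ) / w - (starRingEnd ℂ) w = 0 ↔
      (c : ℂ) * w ^ n = (((‖w‖) ^ 2 - ε : ℝ) : ℂ)) := by
  have hpow : w ^ (n - 1) * w = w ^ n := by
    rw [← pow_succ]; congr 1; omega
  have hconj : (starRingEnd ℂ) w * w = (((‖w‖) ^ 2 : ℝ) : ℂ) := by
    rw [mul_comm, Complex.mul_conj, Complex.sq_norm]
  constructor
  · intro h
    have h2 : ((c : ℂ) * w ^ (n - 1) + (ε : ℂ) / w - (starRingEnd ℂ) w) * w = 0 := by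
      rw [h, zero_mul]
    have h3 : (c : ℂ) * w ^ n + (ε : ℂ) - (((‖w‖) ^ 2 : ℝ) : ℂ) = 0 := by
      rw [← hconj, ← hpow]
      field_simp at h2 ⊢
      linear_combination h2
    push_cast at h3 ⊢
    linear_combination h3
  · intro h
    have h3 : (c : ℂ) * w ^ n + (ε : ℂ) - (((‖w‖) ^ 2 : ℝ) : ℂ) = 0 := by
      rw [h]; push_cast; ring
    rw [← hconj, ← hpow] at h3
    field_simp
    linear_combination h3

set_option maxHeartbeats 2000000 in
/-- Location of the zeros of `G(w) = c w^{n-1} + ε/w − conj w` for small `ε`: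
exactly `n` zeros in the annulus `η⁻¹√ε < |w| < √ε` (with `η = √(n/(n-1))`), exactly `n`
zeros on a circle `|w| = ρ₂` with `√ε < ρ₂ < η√ε`, and no zeros with `|w| ≤ η⁻¹√ε`. -/
theorem location_of_zeros_G (n : ℕ) (hn : 3 ≤ n) (c ε : ℝ) (hc : 0 < c) (hε : 0 < ε)
    (hεb : ε < min (((n : ℝ) - 2) / n * (2 / (n * c)) ^ ((2 : ℝ) / ((n : ℝ) - 2)))
      (min ((1 / (n * c)) ^ ((2 : ℝ) / ((n : ℝ) - 2)) *
          ((n : ℝ) / ((n : ℝ) - 1)) ^ ((n : ℝ) / ((n : ℝ) - 2)))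
        ((1 / (c * ((n : ℝ) - 1))) ^ ((2 : ℝ) / ((n : ℝ) - 2)) *
          (((n : ℝ) - 1) / n) ^ ((n : ℝ) / ((n : ℝ) - 2))))) :
    Set.ncard {w : ℂ | w ≠ 0 ∧
        (c : ℂ) * w ^ (n - 1) + (ε : ℂ) / w - (starRingEnd ℂ) w = 0 ∧
        (Real.sqrt ((n : ℝ) / ((n : ℝ) - 1)))⁻¹ * Real.sqrt ε < ‖w‖ ∧
        ‖w‖ < Real.sqrt ε} = n ∧
    (∃ ρ₂ : ℝ, Real.sqrt ε < ρ₂ ∧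
      ρ₂ < Real.sqrt ((n : ℝ) / ((n : ℝ) - 1)) * Real.sqrt ε ∧
      Set.ncard {w : ℂ | w ≠ 0 ∧
        (c : ℂ) * w ^ (n - 1) + (ε : ℂ) / w - (starRingEnd ℂ) w = 0 ∧
        ‖w‖ = ρ₂} = n) ∧
    ∀ w : ℂ, w ≠ 0 →
      ‖w‖ ≤ (Real.sqrt ((n : ℝ) / ((n : ℝ) - 1)))⁻¹ * Real.sqrt ε →
      (c : ℂ) * w ^ (n - 1) + (ε : ℂ) / w - (starRingEnd ℂ) w ≠ 0 := by
  have hn3 : (3:ℝ) ≤ (n:ℝ) := by exact_mod_cast hn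
  have hN2 : (2:ℝ) < (n:ℝ) := by linarith
  have hn1 : (0:ℝ) < (n:ℝ) - 1 := by linarith
  have hn0 : (0:ℝ) < (n:ℝ) := by linarith
  set η : ℝ := Real.sqrt ((n : ℝ) / ((n : ℝ) - 1)) with hηdef
  set s : ℝ := Real.sqrt ε with hsdef
  have hs0 : 0 < s := Real.sqrt_pos.mpr hε
  have hs2 : s ^ 2 = ε := Real.sq_sqrt hε.le
  have hratio : 1 < (n:ℝ)/((n:ℝ)-1) := by rw [lt_div_iff₀ hn1]; linarith
  have hη1 : 1 < η := by
    rw [hηdef]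
    exact (Real.lt_sqrt (by positivity)).mpr (by rw [one_pow]; exact hratio)
  have hη0 : 0 < η := by linarith
  have hη2 : η ^ 2 = (n:ℝ)/((n:ℝ)-1) := Real.sq_sqrt (by positivity)
  -- the two relevant bounds on ε
  have hεb2 : ε < (1 / ((n:ℝ) * c)) ^ ((2 : ℝ) / ((n : ℝ) - 2)) *
      ((n : ℝ) / ((n : ℝ) - 1)) ^ ((n : ℝ) / ((n : ℝ) - 2)) :=
    lt_of_lt_of_le hεb (le_trans (min_le_right _ _) (min_le_left _ _))
  have hεb3 : ε < (1 / (c * ((n:ℝ) - 1))) ^ ((2 : ℝ) / ((n : ℝ) - 2)) *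
      (((n : ℝ) - 1) / n) ^ ((n : ℝ) / ((n : ℝ) - 2)) :=
    lt_of_lt_of_le hεb (le_trans (min_le_right _ _) (min_le_right _ _))
  set E : ℝ := ε ^ (((n:ℝ) - 2)/2) with hEdef
  set P : ℝ := (((n:ℝ) - 1)/(n:ℝ)) ^ ((n:ℝ)/2) with hPdef
  set Q : ℝ := ((n:ℝ)/((n:ℝ) - 1)) ^ ((n:ℝ)/2) with hQdef
  have hE0 : 0 < E := Real.rpow_pos_of_pos hε _
  have hP0 : 0 < P := Real.rpow_pos_of_pos (by positivity) _
  have hQ0 : 0 < Q := Real.rpow_pos_of_pos (by positivity) _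
  have hPQ : P * Q = 1 := by
    rw [hPdef, hQdef, ← Real.mul_rpow (by positivity) (by positivity),
      show (((n:ℝ) - 1)/(n:ℝ)) * ((n:ℝ)/((n:ℝ) - 1)) = 1 by field_simp, Real.one_rpow]
  have hE2 : E < (1/((n:ℝ)*c)) * Q :=
    aux_rpow ε (1/((n:ℝ)*c)) ((n:ℝ)/((n:ℝ)-1)) (n:ℝ) hε (by positivity) (by positivity) hN2 hεb2
  have hE3 : E < (1/(c*((n:ℝ)-1))) * P :=
    aux_rpow ε (1/(c*((n:ℝ)-1))) (((n:ℝ)-1)/(n:ℝ)) (n:ℝ) hε (by positivity) (by positivity) hN2 hεb3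
  -- sqrt powers
  have hsqrtpow : ∀ y : ℝ, 0 < y → (Real.sqrt y) ^ n = y ^ ((n:ℝ)/2) := by
    intro y hy
    rw [← Real.rpow_natCast (Real.sqrt y) n, Real.sqrt_eq_rpow, ← Real.rpow_mul hy.le]
    congr 1; ring
  have hεpow : ε ^ ((n:ℝ)/2) = ε * E := by
    rw [hEdef, show (n:ℝ)/2 = 1 + ((n:ℝ)-2)/2 by ring, Real.rpow_add hε, Real.rpow_one]
  set x₁ : ℝ := η⁻¹ * s with hx₁def
  set x₂ : ℝ := η * s with hx₂def
  have hx₁0 : 0 < x₁ := by positivity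
  have hx₁eq : x₁ = Real.sqrt ((((n:ℝ)-1)/(n:ℝ)) * ε) := by
    rw [hx₁def, hηdef, hsdef, ← Real.sqrt_inv, inv_div,
      ← Real.sqrt_mul (by positivity)]
  have hx₂eq : x₂ = Real.sqrt (((n:ℝ)/((n:ℝ)-1)) * ε) := by
    rw [hx₂def, hηdef, hsdef, ← Real.sqrt_mul (by positivity)]
  have hx₁sq : x₁ ^ 2 = (((n:ℝ)-1)/(n:ℝ)) * ε := by
    rw [hx₁eq]; exact Real.sq_sqrt (by positivity)
  have hx₂sq : x₂ ^ 2 = ((n:ℝ)/((n:ℝ)-1)) * ε := by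
    rw [hx₂eq]; exact Real.sq_sqrt (by positivity)
  have hx₁pow : x₁ ^ n = P * (ε * E) := by
    rw [hx₁eq, hsqrtpow _ (by positivity), Real.mul_rpow (by positivity) hε.le, hεpow, hPdef]
  have hx₂pow : x₂ ^ n = Q * (ε * E) := by
    rw [hx₂eq, hsqrtpow _ (by positivity), Real.mul_rpow (by positivity) hε.le, hεpow, hQdef]
  -- f(x₁) < 0
  have hfx₁ : c * x₁ ^ n + x₁ ^ 2 - ε < 0 := by
    rw [hx₁pow, hx₁sq]
    have h1 : c * P * ε * E < c * P * ε * ((1/((n:ℝ)*c)) * Q) :=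
      mul_lt_mul_of_pos_left hE2 (by positivity)
    have h2 : c * P * ε * ((1/((n:ℝ)*c)) * Q) = ε / (n:ℝ) := by
      field_simp
      linear_combination hPQ
    have h3 : (((n:ℝ)-1)/(n:ℝ)) * ε - ε = -(ε/(n:ℝ)) := by field_simp; ring
    linarith only [h1, h2, h3]
  -- g(x₂) < 0
  have hgx₂ : c * x₂ ^ n - x₂ ^ 2 + ε < 0 := by
    rw [hx₂pow, hx₂sq]
    have h1 : c * Q * ε * E < c * Q * ε * ((1/(c*((n:ℝ)-1))) * P) :=
      mul_lt_mul_of_pos_left hE3 (by positivity)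
    have h2 : c * Q * ε * ((1/(c*((n:ℝ)-1))) * P) = ε / ((n:ℝ)-1) := by
      field_simp
      linear_combination hPQ
    have h3 : ((n:ℝ)/((n:ℝ)-1)) * ε - ε = ε/((n:ℝ)-1) := by field_simp; ring
    linarith only [h1, h2, h3]
  have hx₁s : x₁ < s := by
    rw [hx₁def]
    calc η⁻¹ * s < 1 * s := mul_lt_mul_of_pos_right (inv_lt_one_of_one_lt₀ hη1) hs0
      _ = s := one_mul s
  have hsx₂ : s < x₂ := by
    rw [hx₂def]
    calc s = 1 * s := (one_mul s).symm
      _ < η * s := mul_lt_mul_of_pos_right hη1 hs0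
  -- ρ₁ : root of f in (x₁, s)
  set F : ℝ → ℝ := fun x => c * x ^ n + x ^ 2 - ε with hFdef
  have hFcont : Continuous F := by fun_prop
  have hFs : 0 < F s := by
    have hFseq : F s = c * s ^ n := by simp only [hFdef]; rw [hs2]; ring
    rw [hFseq]; positivity
  obtain ⟨ρ₁, hρ₁mem, hρ₁⟩ : ∃ x ∈ Set.Ioo x₁ s, F x = 0 := by
    have hsub := intermediate_value_Ioo (le_of_lt hx₁s) hFcont.continuousOn
    have h0 : (0:ℝ) ∈ Set.Ioo (F x₁) (F s) := ⟨hfx₁, hFs⟩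
    obtain ⟨x, hx, hfx⟩ := hsub h0
    exact ⟨x, hx, hfx⟩
  have hρ₁0 : 0 < ρ₁ := lt_trans hx₁0 hρ₁mem.1
  -- uniqueness of the nonneg root of F
  have hFmono : StrictMonoOn F (Set.Ici 0) := by
    intro a ha b hb hab
    simp only [Set.mem_Ici] at ha hb
    have h1 : a ^ n < b ^ n := pow_lt_pow_left₀ hab ha (by omega)
    have h2 : a ^ 2 < b ^ 2 := pow_lt_pow_left₀ hab ha (by norm_num)
    simp only [hFdef]
    linarith only [mul_lt_mul_of_pos_left h1 hc, h2]
  have huniq : ∀ x : ℝ, 0 ≤ x → F x = 0 → x = ρ₁ := by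
    intro x hx hfx
    exact hFmono.injOn (Set.mem_Ici.mpr hx) (Set.mem_Ici.mpr hρ₁0.le) (by rw [hfx, hρ₁])
  -- ρ₂ : root of g in (s, x₂)
  set G : ℝ → ℝ := fun x => c * x ^ n - x ^ 2 + ε with hGdef
  have hGcont : Continuous G := by fun_prop
  have hGs : 0 < G s := by
    have hGseq : G s = c * s ^ n := by simp only [hGdef]; rw [hs2]; ring
    rw [hGseq]; positivity
  obtain ⟨ρ₂, hρ₂mem, hρ₂⟩ : ∃ x ∈ Set.Ioo s x₂, G x = 0 := by
    have hsub := intermediate_value_Ioo' (le_of_lt hsx₂) hGcont.continuousOn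
    have h0 : (0:ℝ) ∈ Set.Ioo (G x₂) (G s) := ⟨hgx₂, hGs⟩
    obtain ⟨x, hx, hfx⟩ := hsub h0
    exact ⟨x, hx, hfx⟩
  have hρ₂0 : 0 < ρ₂ := lt_trans hs0 hρ₂mem.1
  -- basic quantities
  have hρ₁sq : c * ρ₁ ^ n = ε - ρ₁ ^ 2 := by
    have h := hρ₁; simp only [hFdef] at h; linarith only [h]
  have hρ₂sq : c * ρ₂ ^ n = ρ₂ ^ 2 - ε := by
    have h := hρ₂; simp only [hGdef] at h; linarith only [h]
  have hρ₁lt : ρ₁ ^ 2 < ε := by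
    linarith only [mul_pos hc (pow_pos hρ₁0 n), hρ₁sq]
  have hρ₂gt : ε < ρ₂ ^ 2 := by
    linarith only [mul_pos hc (pow_pos hρ₂0 n), hρ₂sq]
  -- injectivity of x ↦ x^n on nonneg reals
  have hpowinj : ∀ x y : ℝ, 0 ≤ x → 0 ≤ y → x ^ n = y ^ n → x = y := by
    intro x y hx hy hxy
    exact (pow_left_strictMonoOn₀ (n := n) (by omega)).injOn
      (Set.mem_Ici.mpr hx) (Set.mem_Ici.mpr hy) hxy
  -- Part 1: the annulus set
  have hne0 : n ≠ 0 := by omega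
  set a₁ : ℂ := (((ρ₁ ^ 2 - ε)/c : ℝ) : ℂ) with ha₁def
  have ha₁ne : a₁ ≠ 0 := by
    rw [ha₁def, Complex.ofReal_ne_zero]
    intro h
    have : ρ₁ ^ 2 - ε = 0 := by field_simp at h; linarith
    linarith
  have habs_a₁ : ‖a₁‖ = (ε - ρ₁ ^ 2)/c := by
    rw [ha₁def, Complex.norm_real, Real.norm_eq_abs, abs_of_neg (by apply div_neg_of_neg_of_pos <;> linarith)]
    field_simp
    ring
  have hset1 : {w : ℂ | w ≠ 0 ∧
        (c : ℂ) * w ^ (n - 1) + (ε : ℂ) / w - (starRingEnd ℂ) w = 0 ∧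
        η⁻¹ * s < ‖w‖ ∧ ‖w‖ < s} = {w : ℂ | w ^ n = a₁} := by
    ext w
    simp only [Set.mem_setOf_eq]
    constructor
    · rintro ⟨hw, heq, hlo, hhi⟩
      rw [aux_equiv n hn c ε w hw] at heq
      have habseq : c * (‖w‖) ^ n = ε - (‖w‖) ^ 2 := by
        have h1 := congrArg (‖·‖) heq
        rw [norm_mul, norm_pow, Complex.norm_real, Complex.norm_real, Real.norm_eq_abs, Real.norm_eq_abs] at h1
        have hsq : ‖w‖ ^ 2 < ε := by
          rw [← hs2]; exact pow_lt_pow_left₀ hhi (norm_nonneg w) (by norm_num)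
        rw [abs_of_pos hc] at h1
        rw [abs_of_neg (by linarith only [hsq])] at h1
        linarith only [h1]
      have hwρ₁ : ‖w‖ = ρ₁ := by
        apply huniq _ (norm_nonneg w)
        simp only [hFdef]; linarith only [habseq]
      rw [hwρ₁] at heq
      rw [ha₁def, Complex.ofReal_div, eq_div_iff (Complex.ofReal_ne_zero.mpr hc.ne')]
      push_cast at heq ⊢
      linear_combination heq
    · intro hw
      have hwabs : ‖w‖ = ρ₁ := by
        apply hpowinj _ _ (norm_nonneg w) hρ₁0.le
        rw [← norm_pow, hw, habs_a₁]
        field_simp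
        linarith
      have hwne : w ≠ 0 := by
        intro h; rw [h] at hwabs; simp at hwabs; linarith
      refine ⟨hwne, ?_, by rw [hwabs]; exact hρ₁mem.1, by rw [hwabs]; exact hρ₁mem.2⟩
      rw [aux_equiv n hn c ε w hwne, hwabs, hw, ha₁def]
      rw [← Complex.ofReal_mul]
      congr 1
      field_simp
  -- Part 2: the circle set
  set a₂ : ℂ := (((ρ₂ ^ 2 - ε)/c : ℝ) : ℂ) with ha₂def
  have ha₂ne : a₂ ≠ 0 := by
    rw [ha₂def, Complex.ofReal_ne_zero]
    intro h
    have : ρ₂ ^ 2 - ε = 0 := by field_simp at h; linarith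
    linarith
  have habs_a₂ : ‖a₂‖ = (ρ₂ ^ 2 - ε)/c := by
    rw [ha₂def, Complex.norm_real, Real.norm_eq_abs, abs_of_pos (by apply div_pos <;> linarith)]
  have hset2 : {w : ℂ | w ≠ 0 ∧
        (c : ℂ) * w ^ (n - 1) + (ε : ℂ) / w - (starRingEnd ℂ) w = 0 ∧
        ‖w‖ = ρ₂} = {w : ℂ | w ^ n = a₂} := by
    ext w
    simp only [Set.mem_setOf_eq]
    constructor
    · rintro ⟨hw, heq, habs⟩
      rw [aux_equiv n hn c ε w hw] at heq
      rw [habs] at heq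
      rw [ha₂def, Complex.ofReal_div, eq_div_iff (Complex.ofReal_ne_zero.mpr hc.ne')]
      push_cast at heq ⊢
      linear_combination heq
    · intro hw
      have hwabs : ‖w‖ = ρ₂ := by
        apply hpowinj _ _ (norm_nonneg w) hρ₂0.le
        rw [← norm_pow, hw, habs_a₂]
        field_simp
        linarith
      have hwne : w ≠ 0 := by
        intro h; rw [h] at hwabs; simp at hwabs; linarith
      refine ⟨hwne, ?_, hwabs⟩
      rw [aux_equiv n hn c ε w hwne, hwabs, hw, ha₂def]
      rw [← Complex.ofReal_mul]
      congr 1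
      field_simp
  refine ⟨?_, ⟨ρ₂, hρ₂mem.1, hρ₂mem.2, ?_⟩, ?_⟩
  · rw [hset1]; exact aux_ncard_pow n (by omega) a₁ ha₁ne
  · rw [hset2]; exact aux_ncard_pow n (by omega) a₂ ha₂ne
  · intro w hw hwle heq
    rw [aux_equiv n hn c ε w hw] at heq
    have hwlt : ‖w‖ < s := lt_of_le_of_lt hwle hx₁s
    have habseq : c * (‖w‖) ^ n = ε - (‖w‖) ^ 2 := by
      have h1 := congrArg (‖·‖) heq
      rw [norm_mul, norm_pow, Complex.norm_real, Complex.norm_real, Real.norm_eq_abs, Real.norm_eq_abs] at h1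
      have hsq : ‖w‖ ^ 2 < ε := by
        rw [← hs2]; exact pow_lt_pow_left₀ hwlt (norm_nonneg w) (by norm_num)
      rw [abs_of_pos hc] at h1
      rw [abs_of_neg (by linarith only [hsq])] at h1
      linarith only [h1]
    have hwρ₁ : ‖w‖ = ρ₁ := by
      apply huniq _ (norm_nonneg w)
      simp only [hFdef]; linarith only [habseq]
    have : x₁ < ‖w‖ := by rw [hwρ₁]; exact hρ₁mem.1
    exact absurd hwle (not_le.mpr this)
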